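/- Generalized Pythagorean theorem (algebraic form): let α > 0, let φ be α-exponentially concave with α-conjugate ψ and dual coordinate η = D^{(α)}φ. For points p, q, r with coordinates (ξ_p,η_p), (ξ_q,η_q), (ξ_r,η_r), the Pythagorean relation D[q:p] + D[r:q] = D[r:p] holds if and only if (1 + α ξ_q·η_p)(1 + α ξ_r·η_q) = (1 + α ξ_r·η_p)(1 + α ξ_q·η_q), where D[b:a] = c^{(α)}(ξ_b, η_a) - φ(ξ_b) - ψ(η_a). -/
import Mathlib


open scoped RealInnerProductSpace

/-- generalized Pythagorean theorem (algebraic form):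
`D[q:p] + D[r:q] = D[r:p]` iff
`(1 + α ξ_q·η_p)(1 + α ξ_r·η_q) = (1 + α ξ_r·η_p)(1 + α ξ_q·η_q)`, where
`D[b:a] = c^{(α)}(ξ_b, η_a) - φ(ξ_b) - ψ(η_a)`. -/
theorem stmt18 {d : ℕ} (α : ℝ) (hα : 0 < α)
    (ξp ξq ξr ηp ηq ηr : EuclideanSpace ℝ (Fin d))
    (φp φq φr ψp ψq ψr : ℝ)
    (hqp : 0 < 1 + α * ⟪ξq, ηp⟫) (hrq : 0 < 1 + α * ⟪ξr, ηq⟫)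
    (hrp : 0 < 1 + α * ⟪ξr, ηp⟫) (hqq : 0 < 1 + α * ⟪ξq, ηq⟫)
    (hpp : 0 < 1 + α * ⟪ξp, ηp⟫) (hrr : 0 < 1 + α * ⟪ξr, ηr⟫)
    -- generalized Fenchel identities `φ(ξ) + ψ(η) = c^{(α)}(ξ, η)`:
    (hFp : φp + ψp = (1/α) * Real.log (1 + α * ⟪ξp, ηp⟫))
    (hFq : φq + ψq = (1/α) * Real.log (1 + α * ⟪ξq, ηq⟫))
    (hFr : φr + ψr = (1/α) * Real.log (1 + α * ⟪ξr, ηr⟫)) :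
    (((1/α) * Real.log (1 + α * ⟪ξq, ηp⟫) - φq - ψp) +
      ((1/α) * Real.log (1 + α * ⟪ξr, ηq⟫) - φr - ψq) =
      ((1/α) * Real.log (1 + α * ⟪ξr, ηp⟫) - φr - ψp)) ↔
    (1 + α * ⟪ξq, ηp⟫) * (1 + α * ⟪ξr, ηq⟫) =
      (1 + α * ⟪ξr, ηp⟫) * (1 + α * ⟪ξq, ηq⟫) := by
  set Lqp := Real.log (1 + α * ⟪ξq, ηp⟫)
  set Lrq := Real.log (1 + α * ⟪ξr, ηq⟫)
  set Lrp := Real.log (1 + α * ⟪ξr, ηp⟫)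
  set Lqq := Real.log (1 + α * ⟪ξq, ηq⟫)
  have hane : (1/α : ℝ) ≠ 0 := by positivity
  have h1 : (((1/α) * Lqp - φq - ψp) + ((1/α) * Lrq - φr - ψq) =
      ((1/α) * Lrp - φr - ψp)) ↔ Lqp + Lrq = Lrp + Lqq := by
    constructor
    · intro h
      have h2 : (1/α) * (Lqp + Lrq) = (1/α) * (Lrp + Lqq) := by
        rw [mul_add, mul_add]; linarith [hFq]
      exact mul_left_cancel₀ hane h2
    · intro h
      have h2 := congrArg (fun x => (1/α) * x) h
      simp only [mul_add] at h2
      linarith [hFq]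
  rw [h1, ← Real.log_mul (ne_of_gt hqp) (ne_of_gt hrq),
    ← Real.log_mul (ne_of_gt hrp) (ne_of_gt hqq)]
  exact ⟨fun h => Real.log_injOn_pos (Set.mem_Ioi.2 (mul_pos hqp hrq))
    (Set.mem_Ioi.2 (mul_pos hrp hqq)) h, fun h => by rw [h]⟩
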